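/- In the star complement setup for a signed graph Σ with eigenvalue μ, underlying graph G, and columns s_1,…,s_n of S = (B | C − μI), the matrix of values ((s_uᵀ(μI−C)⁻¹s_v)²)_{u,v} equals μ²I + A_G. Consequently, if −μ² is not an eigenvalue of A_G, the functions P_u(x) = (s_uᵀ(μI−C)⁻¹x)² on ℝ^t are linearly independent. -/

import Mathlib

open Matrix

/-- The bilinear form `⟨x, y⟩ = xᵀ (μI - C)⁻¹ y` associated with a star complement. -/
noncomputable def starBilin {t : ℕ} (μ : ℝ) (C : Matrix (Fin t) (Fin t) ℝ) (x y : Fin t → ℝ) : ℝ :=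
  x ⬝ᵥ ((μ • (1 : Matrix (Fin t) (Fin t) ℝ) - C)⁻¹).mulVec y

theorem quadratic_functions_and_underlying_graph {k t : ℕ}
    (AS : Matrix (Fin k) (Fin k) ℝ) (B : Matrix (Fin t) (Fin k) ℝ)
    (C : Matrix (Fin t) (Fin t) ℝ)
    (A : Matrix (Fin k ⊕ Fin t) (Fin k ⊕ Fin t) ℝ)
    (hA : A = Matrix.fromBlocks AS Bᵀ B C)
    (hsymm : A.IsSymm)
    (hentries : ∀ p q, A p q ∈ ({0, 1, -1} : Set ℝ))
    (hdiag : ∀ p, A p p = 0)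
    (μ : ℝ) (hμ : μ ∉ ({0, 1, -1} : Set ℝ))
    (hC : ¬ ∃ v : Fin t → ℝ, v ≠ 0 ∧ C.mulVec v = μ • v)
    (hrec : μ • (1 : Matrix (Fin k) (Fin k) ℝ) - AS =
      Bᵀ * (μ • (1 : Matrix (Fin t) (Fin t) ℝ) - C)⁻¹ * B)
    (S : Matrix (Fin t) (Fin k ⊕ Fin t) ℝ)
    (hS : S = Matrix.fromCols B (C - μ • (1 : Matrix (Fin t) (Fin t) ℝ)))
    (AG : Matrix (Fin k ⊕ Fin t) (Fin k ⊕ Fin t) ℝ)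
    (hAG : AG = fun p q => |A p q|) :
    (∀ u v, (starBilin μ C (fun i => S i u) (fun i => S i v)) ^ 2 =
        (μ ^ 2 • (1 : Matrix (Fin k ⊕ Fin t) (Fin k ⊕ Fin t) ℝ) + AG) u v) ∧
    (¬ Module.End.HasEigenvalue (Matrix.toLin' AG) (-μ ^ 2) →
      LinearIndependent ℝ
        (fun u : Fin k ⊕ Fin t => fun x : Fin t → ℝ =>
          (starBilin μ C (fun i => S i u) x) ^ 2)) := by
  -- pointwise symmetry of A
  have hsym' : ∀ p q, A q p = A p q := fun p q => congrFun (congrFun hsymm p) q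
  -- symmetry of C
  have hCsymm : Cᵀ = C := by
    ext i j
    have := hsym' (Sum.inr i) (Sum.inr j)
    simpa [hA] using this
  -- M and its invertibility
  set M : Matrix (Fin t) (Fin t) ℝ := μ • (1 : Matrix (Fin t) (Fin t) ℝ) - C with hM
  have hdet : IsUnit M.det := by
    rw [isUnit_iff_ne_zero]
    intro h
    obtain ⟨v, hv, hv0⟩ := Matrix.exists_mulVec_eq_zero_iff.mpr h
    apply hC
    refine ⟨v, hv, ?_⟩
    have h2 : μ • v - C.mulVec v = 0 := by
      simpa [hM, Matrix.sub_mulVec, Matrix.smul_mulVec] using hv0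
    funext i
    have := congrFun h2 i
    simp only [Pi.sub_apply, Pi.smul_apply, smul_eq_mul, Pi.zero_apply] at this ⊢
    linarith
  have hNM : M⁻¹ * M = 1 := Matrix.nonsing_inv_mul M hdet
  have hMN : M * M⁻¹ = 1 := Matrix.mul_nonsing_inv M hdet
  have hD' : C - μ • (1 : Matrix (Fin t) (Fin t) ℝ) = -M := by rw [hM, neg_sub]
  have hDT : (C - μ • (1 : Matrix (Fin t) (Fin t) ℝ))ᵀ = -M := by
    rw [Matrix.transpose_sub, hCsymm, Matrix.transpose_smul, Matrix.transpose_one, hM, neg_sub]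
  -- the key matrix identity
  have key : Sᵀ * M⁻¹ * S =
      Matrix.fromBlocks (μ • (1 : Matrix (Fin k) (Fin k) ℝ) - AS) (-Bᵀ) (-B) M := by
    rw [hS, Matrix.transpose_fromCols, hDT, hD', Matrix.fromRows_mul,
      Matrix.fromRows_mul_fromCols]
    have e11 : Bᵀ * M⁻¹ * B = μ • (1 : Matrix (Fin k) (Fin k) ℝ) - AS := hrec.symm
    have e12 : Bᵀ * M⁻¹ * (-M) = -Bᵀ := by
      rw [Matrix.mul_neg, Matrix.mul_assoc, hNM, Matrix.mul_one]
    have e21 : -M * M⁻¹ * B = -B := by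
      rw [Matrix.neg_mul, hMN, Matrix.neg_mul, Matrix.one_mul]
    have e22 : -M * M⁻¹ * (-M) = M := by
      rw [Matrix.neg_mul, hMN, Matrix.neg_mul, Matrix.one_mul, neg_neg]
    rw [e11, e12, e21, e22]
  -- the bilinear form as a matrix entry
  have hbil : ∀ u v, starBilin μ C (fun i => S i u) (fun i => S i v) =
      (Sᵀ * M⁻¹ * S) u v := by
    intro u v
    simp only [starBilin, ← hM, Matrix.mul_apply, Matrix.mulVec, dotProduct,
      Matrix.transpose_apply, Finset.sum_mul, Finset.mul_sum]
    rw [Finset.sum_comm]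
    exact Finset.sum_congr rfl fun i _ => Finset.sum_congr rfl fun j _ => by ring
  -- value of the bilinear form: μ•I - A
  have hval : ∀ u v, starBilin μ C (fun i => S i u) (fun i => S i v) =
      (μ • (1 : Matrix (Fin k ⊕ Fin t) (Fin k ⊕ Fin t) ℝ) - A) u v := by
    intro u v
    rw [hbil, key, hA]
    cases u <;> cases v <;>
      simp [Matrix.fromBlocks, Matrix.sub_apply, Matrix.smul_apply, Matrix.one_apply, hM]
  -- first conjunct
  have part1 : ∀ u v, (starBilin μ C (fun i => S i u) (fun i => S i v)) ^ 2 =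
      (μ ^ 2 • (1 : Matrix (Fin k ⊕ Fin t) (Fin k ⊕ Fin t) ℝ) + AG) u v := by
    intro u v
    rw [hval]
    simp only [Matrix.sub_apply, Matrix.add_apply, Matrix.smul_apply, Matrix.one_apply,
      smul_eq_mul]; simp only [hAG]
    by_cases huv : u = v
    · subst huv
      simp [hdiag u]
    · simp only [if_neg huv, mul_zero, zero_sub, neg_sq]
      rcases hentries u v with h | h | h <;> rw [h] <;> norm_num
  refine ⟨part1, ?_⟩
  -- second conjunct
  intro hne
  rw [Fintype.linearIndependent_iff]
  intro g hg
  -- evaluate the vanishing combination at the columns of S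
  have hgv : ∀ v, ∑ u, g u *
      ((μ ^ 2 • (1 : Matrix (Fin k ⊕ Fin t) (Fin k ⊕ Fin t) ℝ) + AG) u v) = 0 := by
    intro v
    have h0 := congrFun hg (fun i => S i v)
    simp only [Finset.sum_apply, Pi.smul_apply, smul_eq_mul, Pi.zero_apply] at h0
    rw [← h0]
    exact Finset.sum_congr rfl fun u _ => by rw [part1 u v]
  -- AG is symmetric
  have hAGsym : ∀ p q, AG p q = AG q p := by
    intro p q; rw [hAG]; simp only; rw [hsym' q p]
  -- derive the eigen-equation
  have hAGg : AG.mulVec g = (-μ ^ 2) • g := by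
    funext v
    have h1 := hgv v
    have h2 : ∑ u, g u * ((μ ^ 2 • (1 : Matrix (Fin k ⊕ Fin t) (Fin k ⊕ Fin t) ℝ) + AG) u v)
        = μ ^ 2 * g v + ∑ u, AG v u * g u := by
      simp only [Matrix.add_apply, Matrix.smul_apply, Matrix.one_apply, smul_eq_mul, mul_add,
        Finset.sum_add_distrib]
      congr 1
      · simp [mul_ite, Finset.sum_ite_eq]
        ring
      · exact Finset.sum_congr rfl fun u _ => by rw [hAGsym u v]; ring
    rw [h2] at h1
    have : (AG.mulVec g) v = ∑ u, AG v u * g u := by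
      simp [Matrix.mulVec, dotProduct]
    rw [this]
    simp only [Pi.smul_apply, smul_eq_mul]
    linarith
  -- conclude g = 0
  by_contra hgne
  push_neg at hgne
  obtain ⟨i, hi⟩ := hgne
  have hg0 : g ≠ 0 := fun h => hi (by rw [h]; rfl)
  apply hne
  apply Module.End.hasEigenvalue_of_hasEigenvector (x := g)
  refine ⟨Module.End.mem_eigenspace_iff.mpr ?_, hg0⟩
  rw [Matrix.toLin'_apply, hAGg]
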